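/- Let Δ be the open unit disc in ℂ and let f : Δ → Δ be a holomorphic map such that the closure of f(Δ) is a compact subset of Δ. Then f has a unique fixed point z₀ ∈ Δ, and the sequence of iterates f^k converges uniformly on compact subsets of Δ to the constant map z₀. -/

import Mathlib

open Complex Metric Set

noncomputable def mob (a z : ℂ) : ℂ := (a - z) / (1 - (starRingEnd ℂ) a * z)

lemma mob_key (a z : ℂ) :
    normSq (1 - (starRingEnd ℂ) a * z) - normSq (a - z)
      = (1 - normSq a) * (1 - normSq z) := by
  have h : ∀ w : ℂ, (normSq w : ℂ) = w * (starRingEnd ℂ) w := fun w => (Complex.mul_conj w).symm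
  apply Complex.ofReal_injective
  push_cast
  rw [h, h, h, h]
  simp only [map_sub, map_mul, map_one, Complex.conj_conj]
  ring

lemma mob_denom_ne (a z : ℂ) (ha : norm a < 1) (hz : norm z ≤ 1) :
    1 - (starRingEnd ℂ) a * z ≠ 0 := by
  intro h
  have : norm ((starRingEnd ℂ) a * z) < 1 := by
    rw [norm_mul, Complex.norm_conj]
    calc norm a * norm z ≤ norm a * 1 :=
      mul_le_mul_of_nonneg_left hz (norm_nonneg _)
    _ < 1 := by simpa using ha
  have h1 : (starRingEnd ℂ) a * z = 1 := by linear_combination -h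
  rw [h1] at this; simp at this

lemma normSq_lt_one_iff {w : ℂ} : normSq w < 1 ↔ norm w < 1 := by
  rw [← Complex.sq_norm]
  constructor <;> intro h <;> nlinarith [norm_nonneg w]

lemma abs_mob_lt_one {a z : ℂ} (ha : norm a < 1) (hz : norm z < 1) :
    norm (mob a z) < 1 := by
  have hd := mob_denom_ne a z ha hz.le
  have hkey := mob_key a z
  have h1 : normSq a < 1 := normSq_lt_one_iff.2 ha
  have h2 : normSq z < 1 := normSq_lt_one_iff.2 hz
  have hpos : 0 < normSq (1 - (starRingEnd ℂ) a * z) := normSq_pos.2 hd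
  rw [mob, norm_div, div_lt_one (norm_pos_iff.mpr hd)]
  have : normSq (a - z) < normSq (1 - (starRingEnd ℂ) a * z) := by nlinarith
  rw [← Complex.sq_norm, ← Complex.sq_norm] at this
  nlinarith [norm_nonneg (a - z), norm_nonneg (1 - (starRingEnd ℂ) a * z)]

lemma mob_self (a : ℂ) : mob a a = 0 := by simp [mob]

lemma mob_invol {a z : ℂ} (ha : norm a < 1) (hz : norm z < 1) :
    mob a (mob a z) = z := by
  have hd := mob_denom_ne a z ha hz.le
  have ha2 : (1 : ℂ) - (starRingEnd ℂ) a * a ≠ 0 := mob_denom_ne a a ha ha.le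
  have hd2 : 1 - (starRingEnd ℂ) a * mob a z ≠ 0 :=
    mob_denom_ne a _ ha (abs_mob_lt_one ha hz).le
  simp only [mob] at hd2 ⊢
  have ha3 : (1:ℂ) - a * (starRingEnd ℂ) a ≠ 0 := by
    rw [mul_comm]; exact ha2
  field_simp at hd2 ⊢
  ring_nf
  rw [show -(a * (starRingEnd ℂ) a * z * (1 - a * (starRingEnd ℂ) a)⁻¹) + z * (1 - a * (starRingEnd ℂ) a)⁻¹ = z * (1 - a * (starRingEnd ℂ) a) * (1 - a * (starRingEnd ℂ) a)⁻¹ by ring, mul_inv_cancel_right₀ ha3]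

lemma mob_differentiableOn {a : ℂ} (ha : norm a < 1) :
    DifferentiableOn ℂ (mob a) (ball (0:ℂ) 1) := by
  apply DifferentiableOn.div
  · exact (differentiable_const a).sub differentiable_id |>.differentiableOn
  · exact ((differentiable_const (1:ℂ)).sub
      ((differentiable_const _).mul differentiable_id)).differentiableOn
  · intro z hz
    exact mob_denom_ne a z ha (by simpa using (mem_ball_zero_iff.1 hz).le)

lemma mob_mapsTo {a : ℂ} (ha : norm a < 1) :
    MapsTo (mob a) (ball (0:ℂ) 1) (ball (0:ℂ) 1) := fun z hz =>
  mem_ball_zero_iff.2 (abs_mob_lt_one ha (mem_ball_zero_iff.1 hz))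

/-- Schwarz–Pick inequality. -/
lemma schwarz_pick {f : ℂ → ℂ} (hf : DifferentiableOn ℂ f (ball (0:ℂ) 1))
    (hmaps : MapsTo f (ball (0:ℂ) 1) (ball (0:ℂ) 1))
    {z w : ℂ} (hz : z ∈ ball (0:ℂ) 1) (hw : w ∈ ball (0:ℂ) 1) :
    norm (mob (f w) (f z)) ≤ norm (mob w z) := by
  have hw1 : norm w < 1 := mem_ball_zero_iff.1 hw
  have hz1 : norm z < 1 := mem_ball_zero_iff.1 hz
  have hfw : norm (f w) < 1 := mem_ball_zero_iff.1 (hmaps hw)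
  set F : ℂ → ℂ := mob (f w) ∘ f ∘ mob w with hF
  have hFd : DifferentiableOn ℂ F (ball (0:ℂ) 1) :=
    ((mob_differentiableOn hfw).comp hf hmaps).comp (mob_differentiableOn hw1) (mob_mapsTo hw1)
  have hFm : MapsTo F (ball (0:ℂ) 1) (ball (0:ℂ) 1) :=
    ((mob_mapsTo hfw).comp hmaps).comp (mob_mapsTo hw1)
  have hF0 : F 0 = 0 := by
    have : mob w 0 = w := by simp [mob]
    simp [hF, Function.comp, this, mob_self]
  have key := Complex.norm_le_norm_of_mapsTo_ball hFd (hFm.mono_right ball_subset_closedBall) hF0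
    (z := mob w z) (abs_mob_lt_one hw1 hz1)
  have : F (mob w z) = mob (f w) (f z) := by
    simp [hF, Function.comp, mob_invol hw1 hz1]
  rwa [this] at key

/-- Scaling by `t ∈ (0,1)` contracts the pseudo-hyperbolic distance by `2t/(1+t²)`. -/
lemma mob_scale {t : ℝ} (ht0 : 0 < t) (ht1 : t < 1) {a b : ℂ}
    (ha : norm a ≤ 1) (hb : norm b ≤ 1) (ha' : norm a < 1) :
    norm (mob (t * a) (t * b)) ≤ 2 * t / (1 + t^2) * norm (mob a b) := by
  have hta : norm ((t:ℂ) * a) < 1 := by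
    rw [norm_mul, Complex.norm_real, Real.norm_eq_abs, abs_of_pos ht0]
    nlinarith [norm_nonneg a]
  have hd1 : (1:ℂ) - (starRingEnd ℂ) ((t:ℂ)*a) * ((t:ℂ)*b) ≠ 0 := mob_denom_ne _ _ hta (by
    rw [norm_mul, Complex.norm_real, Real.norm_eq_abs, abs_of_pos ht0]; nlinarith [norm_nonneg b])
  have hd2 : (1:ℂ) - (starRingEnd ℂ) a * b ≠ 0 := mob_denom_ne a b ha' hb
  have habs : norm ((t:ℂ)*a - (t:ℂ)*b) = t * norm (a - b) := by
    rw [← mul_sub, norm_mul, Complex.norm_real, Real.norm_eq_abs, abs_of_pos ht0]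
  rw [mob, mob, norm_div, norm_div]
  set u : ℂ := (starRingEnd ℂ) a * b with hu_def
  have hdenom : (1:ℂ) - (starRingEnd ℂ) ((t:ℂ)*a) * ((t:ℂ)*b) = 1 - ((t:ℝ)^2 : ℂ) * u := by
    simp only [map_mul, Complex.conj_ofReal, hu_def]
    push_cast
    ring
  set D1 : ℝ := norm (1 - (starRingEnd ℂ) ((t:ℂ)*a) * ((t:ℂ)*b)) with hD1_def
  set D2 : ℝ := norm (1 - u) with hD2_def
  have h12 : (0:ℝ) < 1 + t^2 := by positivity
  have hu1 : normSq u ≤ 1 := by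
    rw [hu_def, Complex.normSq_mul, Complex.normSq_conj]
    have h1 : normSq a ≤ 1 := by rw [← Complex.sq_norm]; nlinarith [norm_nonneg a]
    have h2 : normSq b ≤ 1 := by rw [← Complex.sq_norm]; nlinarith [norm_nonneg b]
    nlinarith [Complex.normSq_nonneg a, Complex.normSq_nonneg b]
  set x : ℝ := u.re
  set y : ℝ := u.im
  have hxy : x^2 + y^2 ≤ 1 := by
    have : normSq u = x^2 + y^2 := by simp [Complex.normSq_apply, sq]; rfl
    linarith [hu1, this.symm.le, this.le]
  have hx1 : -1 ≤ x := by nlinarith [sq_nonneg y]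
  have hD2sq : D2^2 = (1-x)^2 + y^2 := by
    rw [hD2_def, Complex.sq_norm, Complex.normSq_apply]
    simp [Complex.sub_re, Complex.sub_im]
    ring
  have hD1sq : D1^2 = (1 - t^2*x)^2 + (t^2*y)^2 := by
    rw [hD1_def, hdenom, Complex.sq_norm, Complex.normSq_apply]
    have hre : ((1:ℂ) - ((t:ℝ)^2 : ℂ) * u).re = 1 - t^2 * x := by
      simp [Complex.sub_re, Complex.mul_re, ← Complex.ofReal_pow]; exact Or.inl rfl
    have him : ((1:ℂ) - ((t:ℝ)^2 : ℂ) * u).im = -(t^2 * y) := by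
      simp [Complex.sub_im, Complex.mul_im, ← Complex.ofReal_pow]; exact Or.inl rfl
    rw [hre, him]
    ring
  have hsq : ((1+t^2) * D2)^2 ≤ (2 * D1)^2 := by
    have ht2 : t^2 ≤ 1 := by nlinarith
    have h4 : (1+t^2)^2 - 4*t^4 ≥ 0 := by nlinarith [sq_nonneg t]
    have hs : 1 - x^2 - y^2 ≥ 0 := by linarith
    have expand1 : ((1+t^2) * D2)^2 = (1+t^2)^2 * ((1-x)^2 + y^2) := by rw [mul_pow, hD2sq]
    have expand2 : (2 * D1)^2 = 4 * ((1 - t^2*x)^2 + (t^2*y)^2) := by rw [mul_pow, hD1sq]; ring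
    rw [expand1, expand2]
    nlinarith [mul_nonneg h4 hs, mul_nonneg (sq_nonneg (1-t^2)) (by linarith : (0:ℝ) ≤ 1 + x)]
  have hD : (1+t^2) * D2 ≤ 2 * D1 := by
    have hA : 0 ≤ (1+t^2) * D2 := by positivity
    have hB : (0:ℝ) ≤ 2 * D1 := by positivity
    exact (pow_le_pow_iff_left₀ hA hB two_ne_zero).1 hsq
  have main : norm ((t:ℂ)*a - (t:ℂ)*b) / D1
      ≤ (2*t*norm (a-b)/(1+t^2)) / D2 := by
    rw [div_le_div_iff₀ (norm_pos_iff.mpr hd1) (norm_pos_iff.mpr hd2)]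
    rw [habs, div_mul_eq_mul_div, le_div_iff₀ h12]
    calc t * norm (a-b) * D2 * (1+t^2)
        = (t * norm (a-b)) * ((1+t^2) * D2) := by ring
      _ ≤ (t * norm (a-b)) * (2 * D1) :=
          mul_le_mul_of_nonneg_left hD (by positivity)
      _ = 2 * t * norm (a-b) * D1 := by ring
  calc norm ((t:ℂ)*a - (t:ℂ)*b) / D1
      ≤ (2*t*norm (a-b)/(1+t^2)) / D2 := main
    _ = 2 * t / (1 + t^2) * (norm (a-b) / D2) := by ring

lemma abs_sub_le_two_mul_mob {a b : ℂ} (ha : norm a < 1) (hb : norm b < 1) :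
    norm (a - b) ≤ 2 * norm (mob a b) := by
  have hd := mob_denom_ne a b ha hb.le
  have h2 : norm (1 - (starRingEnd ℂ) a * b) ≤ 2 := by
    have := norm_sub_le (1 : ℂ) ((starRingEnd ℂ) a * b)
    simp only [norm_one] at this
    have hab : norm ((starRingEnd ℂ) a * b) ≤ 1 := by
      rw [norm_mul, Complex.norm_conj]
      nlinarith [norm_nonneg a, norm_nonneg b]
    linarith
  have heq : a - b = mob a b * (1 - (starRingEnd ℂ) a * b) := by
    rw [mob, div_mul_cancel₀ _ hd]
  rw [heq, norm_mul]
  calc norm (mob a b) * norm (1 - (starRingEnd ℂ) a * b)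
      ≤ norm (mob a b) * 2 :=
        mul_le_mul_of_nonneg_left h2 (norm_nonneg _)
    _ = 2 * norm (mob a b) := mul_comm _ _

set_option maxHeartbeats 1000000 in
theorem ritt_unit_disc (f : ℂ → ℂ)
    (hf : DifferentiableOn ℂ f (Metric.ball (0 : ℂ) 1))
    (hmaps : Set.MapsTo f (Metric.ball (0 : ℂ) 1) (Metric.ball (0 : ℂ) 1))
    (hcpt : IsCompact (closure (f '' Metric.ball (0 : ℂ) 1)))
    (hsub : closure (f '' Metric.ball (0 : ℂ) 1) ⊆ Metric.ball (0 : ℂ) 1) :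
    ∃ z₀ ∈ Metric.ball (0 : ℂ) 1, f z₀ = z₀ ∧
      (∀ z ∈ Metric.ball (0 : ℂ) 1, f z = z → z = z₀) ∧
      TendstoLocallyUniformlyOn (fun k => f^[k]) (fun _ => z₀) Filter.atTop
        (Metric.ball (0 : ℂ) 1) := by
  have h0B : (0:ℂ) ∈ Metric.ball (0:ℂ) 1 := by simp
  -- a radius `r < 1` bounding the image
  have hKne : (closure (f '' Metric.ball (0:ℂ) 1)).Nonempty :=
    (Set.nonempty_of_mem (Set.mem_image_of_mem f h0B)).closure
  obtain ⟨w, hwK, hwmax⟩ := hcpt.exists_isMaxOn hKne continuous_norm.continuousOn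
  set r : ℝ := norm w with hr_def
  have hr0 : 0 ≤ r := norm_nonneg w
  have hr1 : r < 1 := mem_ball_zero_iff.1 (hsub hwK)
  have hbound : ∀ z ∈ Metric.ball (0:ℂ) 1, norm (f z) ≤ r := fun z hz =>
    hwmax (subset_closure (Set.mem_image_of_mem f hz))
  -- the contraction factor
  set t : ℝ := (1+r)/2 with ht_def
  have ht0 : 0 < t := by positivity
  have htr : r < t := by rw [ht_def]; linarith
  have ht1 : t < 1 := by rw [ht_def]; linarith
  set c : ℝ := 2*t/(1+t^2) with hc_def
  have hc0 : 0 ≤ c := by positivity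
  have hc1 : c < 1 := by
    rw [hc_def, div_lt_one (by positivity)]; nlinarith
  -- the rescaled map `g`
  set g : ℂ → ℂ := fun z => f z / (t:ℂ) with hg_def
  have hgd : DifferentiableOn ℂ g (Metric.ball (0:ℂ) 1) := hf.div_const _
  have hg_abs : ∀ z ∈ Metric.ball (0:ℂ) 1, norm (g z) ≤ r/t := by
    intro z hz
    rw [hg_def]
    simp only [norm_div, Complex.norm_real, Real.norm_eq_abs, abs_of_pos ht0]
    gcongr
    exact hbound z hz
  have hrt1 : r/t < 1 := (div_lt_one ht0).2 htr
  have hg_lt : ∀ z ∈ Metric.ball (0:ℂ) 1, norm (g z) < 1 := fun z hz =>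
    lt_of_le_of_lt (hg_abs z hz) hrt1
  have hg_maps : Set.MapsTo g (Metric.ball (0:ℂ) 1) (Metric.ball (0:ℂ) 1) := fun z hz =>
    mem_ball_zero_iff.2 (hg_lt z hz)
  have htne : (t:ℂ) ≠ 0 := by exact_mod_cast ht0.ne'
  have hfg : ∀ z, f z = (t:ℂ) * g z := by
    intro z
    rw [hg_def]
    field_simp
  -- one-step contraction
  have key : ∀ z ∈ Metric.ball (0:ℂ) 1, ∀ w' ∈ Metric.ball (0:ℂ) 1,
      norm (mob (f w') (f z)) ≤ c * norm (mob w' z) := by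
    intro z hz w' hw'
    rw [hfg z, hfg w']
    calc norm (mob ((t:ℂ) * g w') ((t:ℂ) * g z))
        ≤ c * norm (mob (g w') (g z)) :=
          mob_scale ht0 ht1 (hg_lt w' hw').le (hg_lt z hz).le (hg_lt w' hw')
      _ ≤ c * norm (mob w' z) :=
          mul_le_mul_of_nonneg_left (schwarz_pick hgd hg_maps hz hw') hc0
  -- iterates stay in the ball
  have hmem : ∀ k, ∀ z ∈ Metric.ball (0:ℂ) 1, f^[k] z ∈ Metric.ball (0:ℂ) 1 := by
    intro k
    induction k with
    | zero => intro z hz; simpa using hz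
    | succ n ih =>
      intro z hz
      rw [Function.iterate_succ_apply']
      exact hmaps (ih z hz)
  -- iterated contraction
  have hiter : ∀ k, ∀ z ∈ Metric.ball (0:ℂ) 1, ∀ w' ∈ Metric.ball (0:ℂ) 1,
      norm (mob (f^[k] w') (f^[k] z)) ≤ c^k * norm (mob w' z) := by
    intro k
    induction k with
    | zero => intro z hz w' hw'; simp
    | succ n ih =>
      intro z hz w' hw'
      rw [Function.iterate_succ_apply', Function.iterate_succ_apply']
      calc norm (mob (f (f^[n] w')) (f (f^[n] z)))
          ≤ c * norm (mob (f^[n] w') (f^[n] z)) :=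
            key _ (hmem n z hz) _ (hmem n w' hw')
        _ ≤ c * (c^n * norm (mob w' z)) :=
            mul_le_mul_of_nonneg_left (ih z hz w' hw') hc0
        _ = c^(n+1) * norm (mob w' z) := by ring
  -- the orbit of 0 is Cauchy
  have hdist : ∀ n, dist (f^[n] 0) (f^[n+1] 0) ≤ 2 * c^n := by
    intro n
    have h1 : f^[n+1] (0:ℂ) = f^[n] (f 0) := Function.iterate_succ_apply f n 0
    have hf0 : f 0 ∈ Metric.ball (0:ℂ) 1 := hmaps h0B
    have h2 := hiter n (f 0) hf0 0 h0B
    have h3 := abs_sub_le_two_mul_mob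
      (mem_ball_zero_iff.1 (hmem n 0 h0B)) (mem_ball_zero_iff.1 (hmem n (f 0) hf0))
    have h4 : norm (mob 0 (f 0)) < 1 :=
      abs_mob_lt_one (by simp) (mem_ball_zero_iff.1 hf0)
    rw [Complex.dist_eq, h1]
    calc norm (f^[n] 0 - f^[n] (f 0))
        ≤ 2 * norm (mob (f^[n] 0) (f^[n] (f 0))) := h3
      _ ≤ 2 * (c^n * norm (mob 0 (f 0))) := by
          have := hiter n (f 0) hf0 0 h0B
          linarith
      _ ≤ 2 * c^n := by nlinarith [norm_nonneg (mob 0 (f 0)), pow_nonneg hc0 n]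
  have hcauchy : CauchySeq (fun n => f^[n] (0:ℂ)) :=
    cauchySeq_of_le_geometric c 2 hc1 hdist
  obtain ⟨z₀, hz₀lim⟩ := cauchySeq_tendsto_of_complete hcauchy
  -- z₀ lies in the closed ball of radius r, hence in the unit ball
  have hz₀r : norm z₀ ≤ r := by
    have hev : ∀ᶠ n in Filter.atTop, norm (f^[n] (0:ℂ)) ≤ r := by
      filter_upwards [Filter.eventually_ge_atTop 1] with n hn
      obtain ⟨m, rfl⟩ := Nat.exists_eq_add_of_le hn
      rw [add_comm, Function.iterate_succ_apply']
      exact hbound _ (hmem m _ h0B)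
    exact le_of_tendsto (continuous_norm.continuousAt.tendsto.comp hz₀lim) hev
  have hz₀B : z₀ ∈ Metric.ball (0:ℂ) 1 := mem_ball_zero_iff.2 (lt_of_le_of_lt hz₀r hr1)
  -- z₀ is a fixed point
  have hfix : f z₀ = z₀ := by
    have hcont : ContinuousAt f z₀ :=
      hf.continuousOn.continuousAt (Metric.isOpen_ball.mem_nhds hz₀B)
    have h1 : Filter.Tendsto (fun n => f (f^[n] (0:ℂ))) Filter.atTop (nhds (f z₀)) :=
      hcont.tendsto.comp hz₀lim
    have h2 : Filter.Tendsto (fun n => f (f^[n] (0:ℂ))) Filter.atTop (nhds z₀) := by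
      have : (fun n => f (f^[n] (0:ℂ))) = fun n => f^[n+1] (0:ℂ) := by
        funext n; rw [Function.iterate_succ_apply']
      rw [this]
      exact hz₀lim.comp (Filter.tendsto_add_atTop_nat 1)
    exact tendsto_nhds_unique h1 h2
  refine ⟨z₀, hz₀B, hfix, ?_, ?_⟩
  · -- uniqueness
    intro z hz hfz
    have h1 := key z hz z₀ hz₀B
    rw [hfz, hfix] at h1
    have h2 : norm (mob z₀ z) = 0 := by
      nlinarith [norm_nonneg (mob z₀ z)]
    have h3 := abs_sub_le_two_mul_mob (mem_ball_zero_iff.1 hz₀B) (mem_ball_zero_iff.1 hz)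
    have : norm (z₀ - z) = 0 := by
      have hsym : norm (mob z₀ z) = 0 := h2
      linarith [norm_nonneg (z₀ - z), h3, hsym.le]
    have := norm_eq_zero.1 this
    linear_combination -this
  · -- uniform convergence
    apply TendstoUniformlyOn.tendstoLocallyUniformlyOn
    rw [Metric.tendstoUniformlyOn_iff]
    intro ε hε
    have htend : Filter.Tendsto (fun k => 2 * c^k) Filter.atTop (nhds 0) := by
      have := tendsto_pow_atTop_nhds_zero_of_lt_one hc0 hc1
      simpa using this.const_mul 2
    filter_upwards [htend.eventually (gt_mem_nhds hε)] with k hk z hz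
    have hz₀fix : f^[k] z₀ = z₀ := Function.iterate_fixed hfix k
    have h1 := hiter k z hz z₀ hz₀B
    rw [hz₀fix] at h1
    have h2 := abs_sub_le_two_mul_mob (mem_ball_zero_iff.1 hz₀B)
      (mem_ball_zero_iff.1 (hmem k z hz))
    have h4 : norm (mob z₀ z) < 1 :=
      abs_mob_lt_one (mem_ball_zero_iff.1 hz₀B) (mem_ball_zero_iff.1 hz)
    rw [Complex.dist_eq]
    calc norm (z₀ - f^[k] z)
        ≤ 2 * norm (mob z₀ (f^[k] z)) := h2
      _ ≤ 2 * (c^k * norm (mob z₀ z)) := by linarith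
      _ ≤ 2 * c^k := by nlinarith [norm_nonneg (mob z₀ z), pow_nonneg hc0 k]
      _ < ε := hk
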